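/- Let R be a commutative ring, q ∈ R, and (A, σ_A) a twisted commutative R-algebra with y ∈ A satisfying σ_A(y) = qy. Then the unique σ_A-semilinear endomorphism σ of the twisted divided power polynomial ring A⟨ξ⟩_{q,y} satisfying σ(ξ^{[n]}) = Σ_{i=0}^{n} y^i ξ^{[n−i]} for all n ∈ ℕ is a ring homomorphism; moreover the A-algebra morphism A[ξ] → A⟨ξ⟩_{q,y} sending ξ^{(n)} to (n)_q! ξ^{[n]} intertwines the σ_A-semilinear endomorphism of A[ξ] with σ(ξ) = ξ + y and the endomorphism σ of A⟨ξ⟩_{q,y}. -/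

import Mathlib

def qInt {R : Type*} [CommRing R] (q : R) (m : ℕ) : R := ∑ i ∈ Finset.range m, q ^ i

def qFact {R : Type*} [CommRing R] (q : R) : ℕ → R
  | 0 => 1
  | n + 1 => qFact q n * qInt q (n + 1)

def qChoose {R : Type*} [CommRing R] (q : R) : ℕ → ℕ → R
  | _, 0 => 1
  | 0, _ + 1 => 0
  | n + 1, k + 1 => qChoose q n k + q ^ (k + 1) * qChoose q n (k + 1)

noncomputable def twistedPow {A : Type*} [CommRing A] (q y : A) (n : ℕ) : Polynomial A :=
  ∏ i ∈ Finset.range n, (Polynomial.X + Polynomial.C (qInt q i * y))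

def dpCoeff {A : Type*} [CommRing A] (q y : A) (m n i : ℕ) : A :=
  (-1 : A) ^ i * q ^ (i * (i - 1) / 2) * qChoose q (m + n - i) m * qChoose q m i * y ^ i

namespace S10

variable {R : Type*} [CommRing R] (q : R)

lemma qInt_zero : qInt q 0 = 0 := by simp [qInt]

lemma qInt_one : qInt q 1 = 1 := by simp [qInt]

lemma qInt_add (a b : ℕ) : qInt q (a + b) = qInt q a + q ^ a * qInt q b := by
  simp only [qInt, Finset.sum_range_add, pow_add, Finset.mul_sum]

lemma qInt_succ (n : ℕ) : qInt q (n + 1) = 1 + q * qInt q n := by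
  have := qInt_add q 1 n
  rw [Nat.add_comm] at this
  simpa [qInt_one, pow_one] using this

lemma qInt_succ' (n : ℕ) : qInt q (n + 1) = qInt q n + q ^ n := by
  have := qInt_add q n 1
  simpa [qInt_one] using this

lemma qChoose_zero (n : ℕ) : qChoose q n 0 = 1 := by cases n <;> rfl

lemma qChoose_succ (n k : ℕ) :
    qChoose q (n + 1) (k + 1) = qChoose q n k + q ^ (k + 1) * qChoose q n (k + 1) := rfl

lemma qChoose_eq_zero : ∀ {n k : ℕ}, n < k → qChoose q n k = 0 := by
  intro n
  induction n with
  | zero =>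
    intro k hk
    match k, hk with
    | k + 1, _ => rfl
  | succ n ih =>
    intro k hk
    match k, hk with
    | k + 1, hk =>
      rw [qChoose_succ, ih (by omega), ih (by omega), mul_zero, add_zero]

lemma qFact_succ (n : ℕ) : qFact q (n + 1) = qFact q n * qInt q (n + 1) := rfl

/-- the partial product `(n)_q (n-1)_q ⋯ (n-k+1)_q`. -/
def gP (n k : ℕ) : R := ∏ i ∈ Finset.range k, qInt q (n - i)

lemma gP_zero (n : ℕ) : gP q n 0 = 1 := by simp [gP]

lemma gP_succ (n k : ℕ) : gP q n (k + 1) = gP q n k * qInt q (n - k) :=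
  Finset.prod_range_succ _ _

lemma gP_succ' (n k : ℕ) : gP q (n + 1) (k + 1) = qInt q (n + 1) * gP q n k := by
  rw [gP, Finset.prod_range_succ']
  simp only [Nat.succ_sub_succ_eq_sub, Nat.sub_zero, gP]
  ring

lemma gP_eq_zero {n k : ℕ} (h : n < k) : gP q n k = 0 := by
  apply Finset.prod_eq_zero (Finset.mem_range.mpr h)
  simp [qInt_zero]

lemma L4 (m k : ℕ) :
    qInt q (k + 1) * qChoose q m (k + 1) = qInt q (m - k) * qChoose q m k := by
  induction m generalizing k with
  | zero => simp [qChoose_eq_zero q (by omega : 0 < k + 1), qInt_zero]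
  | succ m ih =>
    cases k with
    | zero =>
      have h1 : qChoose q m 1 = qInt q m := by
        have := ih 0
        simpa [qInt_one, qChoose_zero] using this
      rw [qInt_one, one_mul, qChoose_succ, qChoose_zero q m, h1, qChoose_zero,
        Nat.sub_zero, mul_one, qInt_succ, pow_one]
    | succ k =>
      by_cases h : m ≤ k
      · rw [qChoose_eq_zero q (show m + 1 < k + 1 + 1 by omega), mul_zero]
        rcases eq_or_lt_of_le h with h' | h'
        · rw [show m + 1 - (k + 1) = 0 by omega, qInt_zero, zero_mul]
        · rw [qChoose_eq_zero q (show m + 1 < k + 1 by omega), mul_zero]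
      · push_neg at h
        rw [qChoose_succ, qChoose_succ,
          show m + 1 - (k + 1) = m - k by omega]
        have h1 : qInt q (k + 1 + 1) * qChoose q m (k + 1 + 1)
            = qInt q (m - k - 1) * qChoose q m (k + 1) := by
          rw [show m - k - 1 = m - (k + 1) by omega]; exact ih (k + 1)
        have h2 : qInt q (k + 1) * qChoose q m (k + 1) = qInt q (m - k) * qChoose q m k :=
          ih k
        have e : qInt q (k + 1 + 1) + q ^ (k + 1 + 1) * qInt q (m - k - 1)
            = qInt q (k + 1) + q ^ (k + 1) * qInt q (m - k) := by
          rw [← qInt_add, ← qInt_add, show k + 1 + 1 + (m - k - 1) = m + 1 by omega,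
            show k + 1 + (m - k) = m + 1 by omega]
        linear_combination qChoose q m (k + 1) * e + q ^ (k + 1 + 1) * h1 + h2

lemma L1 {m k : ℕ} (h : k ≤ m) :
    qChoose q m k * qFact q k * qFact q (m - k) = qFact q m := by
  induction k with
  | zero => simp [qChoose_zero, qFact]
  | succ k ih =>
    have hk : k ≤ m := by omega
    have e1 : qFact q (k + 1) = qFact q k * qInt q (k + 1) := rfl
    have e2 : qFact q (m - k) = qFact q (m - k - 1) * qInt q (m - k) := by
      rw [show m - k = (m - k - 1) + 1 by omega, qFact_succ,
        show m - k - 1 + 1 = m - k by omega]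
    have h4 := L4 q m k
    calc qChoose q m (k + 1) * qFact q (k + 1) * qFact q (m - (k + 1))
        = (qInt q (k + 1) * qChoose q m (k + 1)) * qFact q k * qFact q (m - k - 1) := by
          rw [e1, show m - (k+1) = m - k - 1 by omega]; ring
      _ = (qInt q (m - k) * qChoose q m k) * qFact q k * qFact q (m - k - 1) := by rw [h4]
      _ = qChoose q m k * qFact q k * qFact q (m - k) := by rw [e2]; ring
      _ = qFact q m := ih hk

lemma L2 {n k : ℕ} (h : k ≤ n) : gP q n k * qFact q (n - k) = qFact q n := by
  induction k with
  | zero => simp [gP_zero]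
  | succ k ih =>
    have e2 : qFact q (n - k) = qFact q (n - k - 1) * qInt q (n - k) := by
      rw [show n - k = (n - k - 1) + 1 by omega, qFact_succ,
        show n - k - 1 + 1 = n - k by omega]
    calc gP q n (k + 1) * qFact q (n - (k + 1))
        = gP q n k * (qFact q (n - k - 1) * qInt q (n - k)) := by
          rw [gP_succ, show n - (k + 1) = n - k - 1 by omega]; ring
      _ = gP q n k * qFact q (n - k) := by rw [e2]
      _ = qFact q n := ih (by omega)

/-- `cc q m n k` : the coefficient in the divided-power multiplication rule (without `y^k`). -/
def cc (m n k : ℕ) : R :=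
  (-1 : R) ^ k * q ^ (k * (k - 1) / 2) * qChoose q (m + n - k) m * qChoose q m k

/-- `eC q m n k` : the coefficient in the twisted-power multiplication rule. -/
def eC (m n k : ℕ) : R :=
  (-1 : R) ^ k * q ^ (k * (k - 1) / 2) * qChoose q m k * gP q n k

lemma cc_eq_zero_left {m n k : ℕ} (h : m < k) : cc q m n k = 0 := by
  rw [cc, qChoose_eq_zero q h, mul_zero]

lemma cc_eq_zero_right {m n k : ℕ} (h : n < k) : cc q m n k = 0 := by
  rcases Nat.lt_or_ge (m + n) k with h' | h'
  · exact cc_eq_zero_left q (by omega)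
  · rw [cc, qChoose_eq_zero q (show m + n - k < m by omega)]; ring

lemma eC_eq_zero_left {m n k : ℕ} (h : m < k) : eC q m n k = 0 := by
  rw [eC, qChoose_eq_zero q h]; ring

lemma eC_eq_zero_right {m n k : ℕ} (h : n < k) : eC q m n k = 0 := by
  rw [eC, gP_eq_zero q h, mul_zero]

lemma L3 {m n k : ℕ} (h : k ≤ n) :
    cc q m n k * qFact q m * qFact q n = eC q m n k * qFact q (m + n - k) := by
  have h1 : qChoose q (m + n - k) m * qFact q m * qFact q (n - k) = qFact q (m + n - k) := by
    have := L1 q (show m ≤ m + n - k by omega)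
    rwa [show m + n - k - m = n - k by omega] at this
  have h2 : gP q n k * qFact q (n - k) = qFact q n := L2 q h
  calc cc q m n k * qFact q m * qFact q n
      = (-1:R) ^ k * q ^ (k * (k - 1) / 2) * qChoose q m k * gP q n k *
        (qChoose q (m + n - k) m * qFact q m * qFact q (n - k)) := by
        rw [cc, ← h2]; ring
    _ = eC q m n k * qFact q (m + n - k) := by rw [h1, eC]

lemma pow_tri_succ (k : ℕ) : q ^ ((k + 1) * (k + 1 - 1) / 2) = q ^ (k * (k - 1) / 2) * q ^ k := by
  rw [← pow_add]
  congr 1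
  have h1 := Finset.sum_range_id (k + 1)
  have h2 := Finset.sum_range_id k
  have h3 := Finset.sum_range_succ (fun i => i) k
  omega

lemma R1 {m n k : ℕ} (h : k ≤ n) :
    eC q m (n + 1) (k + 1) = eC q m n (k + 1) - q ^ n * qInt q (m - k) * eC q m n k := by
  rw [eC, eC, eC, gP_succ', gP_succ]
  have h4 := L4 q m k
  have e : qInt q (n + 1) = qInt q (n - k) + q ^ (n - k) * qInt q (k + 1) := by
    rw [← qInt_add, show n - k + (k + 1) = n + 1 by omega]
  have epow : q ^ n = q ^ (n - k) * q ^ k := by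
    rw [← pow_add, show n - k + k = n by omega]
  rw [pow_tri_succ]
  calc (-1:R) ^ (k+1) * (q ^ (k * (k-1)/2) * q ^ k) * qChoose q m (k+1) *
        (qInt q (n+1) * gP q n k)
      = (-1:R)^(k+1) * (q ^ (k*(k-1)/2) * q^k) * qChoose q m (k+1) *
        ((qInt q (n-k) + q^(n-k) * qInt q (k+1)) * gP q n k) := by rw [← e]
    _ = (-1:R)^(k+1) * (q^(k*(k-1)/2) * q^k) * qChoose q m (k+1) * (qInt q (n-k) * gP q n k)
        + (-1:R)^(k+1) * (q^(k*(k-1)/2) * q^k) * (qInt q (k+1) * qChoose q m (k+1)) *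
          (q^(n-k) * gP q n k) := by ring
    _ = (-1:R)^(k+1) * (q^(k*(k-1)/2) * q^k) * qChoose q m (k+1) * (gP q n k * qInt q (n-k))
        - q^n * qInt q (m-k) * ((-1:R)^k * q^(k*(k-1)/2) * qChoose q m k * gP q n k) := by
        rw [h4, epow]; ring

section Poly

open Polynomial

variable {A : Type*} [CommRing A] (q y : A)

lemma gP_rec {n i : ℕ} (h : i ≤ n + 1) :
    gP q (n + 1) i = gP q n i + q ^ (n + 1 - i) * qInt q i * gP q n (i - 1) := by
  cases i with
  | zero => simp [gP_zero, qInt_zero]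
  | succ i =>
    rw [gP_succ', gP_succ, Nat.succ_sub_succ, Nat.add_sub_cancel]
    have e : qInt q (n + 1) = qInt q (n - i) + q ^ (n - i) * qInt q (i + 1) := by
      rw [← qInt_add, show n - i + (i + 1) = n + 1 by omega]
    rw [e]; ring

lemma eC_zero (m n : ℕ) : eC q m n 0 = 1 := by
  simp [eC, qChoose_zero, gP_zero]

lemma tp_zero : twistedPow q y 0 = 1 := by simp [twistedPow]

lemma tp_succ (n : ℕ) :
    twistedPow q y (n + 1) = twistedPow q y n * (X + C (qInt q n * y)) :=
  Finset.prod_range_succ _ _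

lemma tp_mul_linear (t : ℕ) (c : A) :
    twistedPow q y t * (X + C (c * y)) =
    twistedPow q y (t + 1) + C ((c - qInt q t) * y) * twistedPow q y t := by
  rw [tp_succ]
  have : C ((c - qInt q t) * y) = C (c * y) - C (qInt q t * y) := by
    rw [← map_sub]; congr 1; ring
  rw [this]; ring

lemma Sshift (n : ℕ) :
    ∏ i ∈ Finset.range n, (X + C (qInt q (i + 1) * y)) =
    ∑ i ∈ Finset.range (n + 1), C (gP q n i * y ^ i) * twistedPow q y (n - i) := by
  induction n with
  | zero => simp [tp_zero, gP_zero]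
  | succ n ih =>
    rw [Finset.prod_range_succ, ih, Finset.sum_mul]
    have step : ∀ i ∈ Finset.range (n + 1),
        C (gP q n i * y ^ i) * twistedPow q y (n - i) * (X + C (qInt q (n + 1) * y)) =
        C (gP q n i * y ^ i) * twistedPow q y (n + 1 - i) +
        C (q ^ (n - i) * qInt q (i + 1) * gP q n i * y ^ (i + 1)) * twistedPow q y (n - i) := by
      intro i hi
      rw [Finset.mem_range] at hi
      rw [mul_assoc, tp_mul_linear, show n - i + 1 = n + 1 - i by omega]
      have e : qInt q (n + 1) - qInt q (n - i) = q ^ (n - i) * qInt q (i + 1) := by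
        rw [show qInt q (n+1) = qInt q (n - i) + q ^ (n - i) * qInt q (i + 1) by
          rw [← qInt_add, show n - i + (i + 1) = n + 1 by omega]]
        ring
      rw [mul_add, e]
      rw [show C (q ^ (n - i) * qInt q (i + 1) * gP q n i * y ^ (i + 1)) =
        C (gP q n i * y ^ i) * C (q ^ (n - i) * qInt q (i + 1) * y) by
          rw [← map_mul]; congr 1; ring]
      ring
    rw [Finset.sum_congr rfl step, Finset.sum_add_distrib]
    have split : ∀ i ∈ Finset.range (n + 2),
        C (gP q (n + 1) i * y ^ i) * twistedPow q y (n + 1 - i) =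
        C (gP q n i * y ^ i) * twistedPow q y (n + 1 - i) +
        C (q ^ (n + 1 - i) * qInt q i * gP q n (i - 1) * y ^ i) * twistedPow q y (n + 1 - i) := by
      intro i hi
      rw [Finset.mem_range] at hi
      rw [gP_rec q (show i ≤ n + 1 by omega), ← add_mul, ← map_add]
      congr 2
      ring
    rw [Finset.sum_congr rfl split, Finset.sum_add_distrib]
    congr 1
    · -- first parts
      rw [Finset.sum_range_succ
        (fun i => C (gP q n i * y ^ i) * twistedPow q y (n + 1 - i)) (n + 1),
        gP_eq_zero q (show n < n + 1 by omega)]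
      simp
    · -- second parts
      rw [Finset.sum_range_succ'
        (fun i => C (q ^ (n + 1 - i) * qInt q i * gP q n (i - 1) * y ^ i) *
          twistedPow q y (n + 1 - i)) (n + 1)]
      rw [show C (q ^ (n + 1 - 0) * qInt q 0 * gP q n (0 - 1) * y ^ 0) *
          twistedPow q y (n + 1 - 0) = 0 by simp [qInt_zero]]
      rw [add_zero]
      apply Finset.sum_congr rfl
      intro i _
      simp only [Nat.succ_sub_succ, Nat.add_sub_cancel, Nat.sub_zero]

lemma Pmul (m n : ℕ) :
    twistedPow q y m * twistedPow q y n =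
    ∑ k ∈ Finset.range (n + 1), C (eC q m n k * y ^ k) * twistedPow q y (m + n - k) := by
  induction n with
  | zero =>
    simp [tp_zero, eC_zero]
  | succ n ih =>
    rw [tp_succ, ← mul_assoc, ih, Finset.sum_mul]
    have step : ∀ k ∈ Finset.range (n + 1),
        C (eC q m n k * y ^ k) * twistedPow q y (m + n - k) * (X + C (qInt q n * y)) =
        C (eC q m n k * y ^ k) * twistedPow q y (m + n + 1 - k) -
        C (q ^ n * qInt q (m - k) * eC q m n k * y ^ (k + 1)) * twistedPow q y (m + n - k) := by
      intro k hk
      rw [Finset.mem_range] at hk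
      have e : eC q m n k * (qInt q n - qInt q (m + n - k)) =
          -(q ^ n * qInt q (m - k) * eC q m n k) := by
        by_cases hm : k ≤ m
        · rw [show qInt q (m + n - k) = qInt q n + q ^ n * qInt q (m - k) by
            rw [← qInt_add, show n + (m - k) = m + n - k by omega]]
          ring
        · rw [eC_eq_zero_left q (show m < k by omega)]; ring
      have e2 : C (eC q m n k * y ^ k) * C ((qInt q n - qInt q (m + n - k)) * y)
          = -C (q ^ n * qInt q (m - k) * eC q m n k * y ^ (k + 1)) := by
        rw [← map_mul, ← map_neg]
        congr 1
        linear_combination y ^ k * y * e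
      rw [mul_assoc, tp_mul_linear, show m + n - k + 1 = m + n + 1 - k by omega, mul_add,
        ← mul_assoc (C (eC q m n k * y ^ k)) _ _, e2]
      ring
    rw [Finset.sum_congr rfl step, Finset.sum_sub_distrib]
    have tgt : ∀ k ∈ Finset.range (n + 1),
        C (eC q m (n + 1) (k + 1) * y ^ (k + 1)) * twistedPow q y (m + (n + 1) - (k + 1)) =
        C (eC q m n (k + 1) * y ^ (k + 1)) * twistedPow q y (m + n - k) -
        C (q ^ n * qInt q (m - k) * eC q m n k * y ^ (k + 1)) * twistedPow q y (m + n - k) := by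
      intro k hk
      rw [Finset.mem_range] at hk
      rw [R1 q (show k ≤ n by omega), show m + (n + 1) - (k + 1) = m + n - k by omega]
      rw [show C ((eC q m n (k + 1) - q ^ n * qInt q (m - k) * eC q m n k) * y ^ (k + 1)) =
        C (eC q m n (k + 1) * y ^ (k + 1)) -
        C (q ^ n * qInt q (m - k) * eC q m n k * y ^ (k + 1)) by
          rw [← map_sub]; congr 1; ring]
      ring
    have hR : ∑ k ∈ Finset.range (n + 1 + 1),
        C (eC q m (n + 1) k * y ^ k) * twistedPow q y (m + (n + 1) - k) =
        ∑ k ∈ Finset.range (n + 1),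
          (C (eC q m n (k + 1) * y ^ (k + 1)) * twistedPow q y (m + n - k) -
           C (q ^ n * qInt q (m - k) * eC q m n k * y ^ (k + 1)) * twistedPow q y (m + n - k)) +
        C (eC q m (n + 1) 0 * y ^ 0) * twistedPow q y (m + (n + 1) - 0) := by
      rw [Finset.sum_range_succ'
        (fun k => C (eC q m (n + 1) k * y ^ k) * twistedPow q y (m + (n + 1) - k)) (n + 1)]
      rw [Finset.sum_congr rfl tgt]
    have hA : ∑ k ∈ Finset.range (n + 1),
        C (eC q m n k * y ^ k) * twistedPow q y (m + n + 1 - k) =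
        ∑ k ∈ Finset.range (n + 1),
          C (eC q m n (k + 1) * y ^ (k + 1)) * twistedPow q y (m + n - k) +
        C (eC q m (n + 1) 0 * y ^ 0) * twistedPow q y (m + (n + 1) - 0) := by
      rw [Finset.sum_range_succ'
        (fun k => C (eC q m n k * y ^ k) * twistedPow q y (m + n + 1 - k)) n]
      rw [Finset.sum_range_succ
        (fun k => C (eC q m n (k + 1) * y ^ (k + 1)) * twistedPow q y (m + n - k)) n]
      rw [eC_eq_zero_right q (show n < n + 1 by omega)]
      simp only [zero_mul, map_zero, add_zero]
      rw [eC_zero, eC_zero]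
      rw [show m + (n + 1) - 0 = m + n + 1 - 0 by omega]
      congr 1
      apply Finset.sum_congr rfl
      intro k hk
      rw [Finset.mem_range] at hk
      rw [show m + n + 1 - (k + 1) = m + n - k by omega]
    rw [hR, Finset.sum_sub_distrib, hA]
    abel

end Poly

section Model

open Polynomial

variable {A : Type*} [CommRing A] (q y : A)

lemma tp_monic (n : ℕ) : (twistedPow q y n).Monic :=
  monic_prod_of_monic _ _ fun i _ => monic_X_add_C _

lemma tp_natDegree_le (n : ℕ) : (twistedPow q y n).natDegree ≤ n := by
  refine le_trans (Polynomial.natDegree_prod_le _ _) ?_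
  have h : ∀ i ∈ Finset.range n, (X + C (qInt q i * y)).natDegree ≤ 1 := by
    intro i _
    have h1 : (X + C (qInt q i * y)).natDegree ≤ max (X : A[X]).natDegree (C (qInt q i * y)).natDegree :=
      Polynomial.natDegree_add_le _ _
    simp only [natDegree_C] at h1
    exact le_trans h1 (by simpa using Polynomial.natDegree_X_le)
  refine le_trans (Finset.sum_le_sum (g := fun _ => 1) h) ?_
  simp

lemma tp_coeff_high {n j : ℕ} (h : n < j) : (twistedPow q y n).coeff j = 0 :=
  Polynomial.coeff_eq_zero_of_natDegree_lt (lt_of_le_of_lt (tp_natDegree_le q y n) h)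

lemma tp_coeff_self (n : ℕ) : (twistedPow q y n).coeff n = 1 := by
  induction n with
  | zero => simp [tp_zero]
  | succ n ih =>
    rw [tp_succ, mul_add, Polynomial.coeff_add, Polynomial.coeff_mul_X,
      Polynomial.coeff_mul_C, ih, tp_coeff_high q y (by omega : n < n + 1), zero_mul, add_zero]

lemma extraction_zero : ∀ (N : ℕ) (a : ℕ → A),
    (∑ t ∈ Finset.range N, C (a t) * twistedPow q y t) = 0 → ∀ t, t < N → a t = 0 := by
  intro N
  induction N with
  | zero => intro a _ t ht; omega
  | succ N ih =>
    intro a h t ht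
    have hN : a N = 0 := by
      have hc := congrArg (fun p => Polynomial.coeff p N) h
      simp only [Polynomial.finset_sum_coeff, Polynomial.coeff_zero] at hc
      rw [Finset.sum_range_succ] at hc
      rw [Finset.sum_eq_zero (fun t ht' => by
        rw [Finset.mem_range] at ht'
        rw [Polynomial.coeff_C_mul, tp_coeff_high q y ht', mul_zero])] at hc
      rw [zero_add, Polynomial.coeff_C_mul, tp_coeff_self, mul_one] at hc
      exact hc
    rcases Nat.lt_or_ge t N with h' | h'
    · apply ih a ?_ t h'
      rw [Finset.sum_range_succ, hN] at h
      simpa using h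
    · have : t = N := by omega
      rw [this]; exact hN

lemma extraction_eq (N : ℕ) (a b : ℕ → A)
    (h : (∑ t ∈ Finset.range N, C (a t) * twistedPow q y t) =
         (∑ t ∈ Finset.range N, C (b t) * twistedPow q y t)) :
    ∀ t, t < N → a t = b t := by
  intro t ht
  have h0 : (∑ t ∈ Finset.range N, C (a t - b t) * twistedPow q y t) = 0 := by
    simp only [map_sub, sub_mul, Finset.sum_sub_distrib, h, sub_self]
  have h2 := extraction_zero q y N (fun t => a t - b t) h0 t ht
  exact sub_eq_zero.mp h2

/-- index set for "way 2" -/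
def S2set (m n : ℕ) : Finset ((_ : ℕ) × ℕ) :=
  (Finset.range (n + 1)).sigma fun k => Finset.range (m + n - k + 1)

def Fib2 (m n s : ℕ) : Finset ((_ : ℕ) × ℕ) :=
  (S2set m n).filter fun x => x.1 + x.2 = s

/-- index set for "way 1" -/
def S1set (m n : ℕ) : Finset ((_ : ℕ) × (_ : ℕ) × ℕ) :=
  (Finset.range (m + 1)).sigma fun _ =>
    (Finset.range (n + 1)).sigma fun j => Finset.range (n - j + 1)

def Fib1 (m n s : ℕ) : Finset ((_ : ℕ) × (_ : ℕ) × ℕ) :=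
  (S1set m n).filter fun x => x.1 + x.2.1 + x.2.2 = s

lemma pullout {ι : Type*} (F : Finset ι) (c : ι → A) (d : A) (T : A[X]) :
    ∑ x ∈ F, C (c x * d) * T = C ((∑ x ∈ F, c x) * d) * T := by
  calc ∑ x ∈ F, C (c x * d) * T = ∑ x ∈ F, C (c x) * (C d * T) := by
        apply Finset.sum_congr rfl; intro x _; rw [map_mul]; ring
    _ = (∑ x ∈ F, C (c x)) * (C d * T) := (Finset.sum_mul _ _ _).symm
    _ = C (∑ x ∈ F, c x) * (C d * T) := by rw [map_sum]
    _ = C ((∑ x ∈ F, c x) * d) * T := by rw [map_mul]; ring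

lemma tp_comp (t : ℕ) :
    Polynomial.aeval (R := A) (X + C y) (twistedPow q (q * y) t)
      = ∏ i ∈ Finset.range t, (X + C (qInt q (i + 1) * y)) := by
  rw [twistedPow, map_prod]
  apply Finset.prod_congr rfl
  intro i _
  rw [map_add, aeval_X, aeval_C, Polynomial.algebraMap_eq]
  rw [show (X + C y) + C (qInt q i * (q * y)) = X + (C y + C (qInt q i * (q * y))) by ring,
    ← map_add]
  congr 2
  rw [qInt_succ]
  ring

lemma Eright (m n : ℕ) :
    (∏ i ∈ Finset.range m, (X + C (qInt q (i + 1) * y))) *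
    (∏ i ∈ Finset.range n, (X + C (qInt q (i + 1) * y))) =
    ∑ s ∈ Finset.range (m + n + 1),
      C ((∑ x ∈ Fib2 m n s, q ^ x.1 * eC q m n x.1 * gP q (m + n - x.1) x.2) * y ^ s) *
        twistedPow q y (m + n - s) := by
  have hmaps : ∀ x ∈ S2set m n, x.1 + x.2 ∈ Finset.range (m + n + 1) := by
    intro x hx
    simp only [S2set, Finset.mem_sigma, Finset.mem_range] at hx
    simp only [Finset.mem_range]
    omega
  calc (∏ i ∈ Finset.range m, (X + C (qInt q (i + 1) * y))) *
      (∏ i ∈ Finset.range n, (X + C (qInt q (i + 1) * y)))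
      = Polynomial.aeval (R := A) (X + C y) (twistedPow q (q * y) m * twistedPow q (q * y) n) := by
        rw [map_mul, tp_comp, tp_comp]
    _ = ∑ k ∈ Finset.range (n + 1), C (eC q m n k * (q * y) ^ k) *
          ∏ i ∈ Finset.range (m + n - k), (X + C (qInt q (i + 1) * y)) := by
        rw [Pmul q (q * y) m n, map_sum]
        apply Finset.sum_congr rfl
        intro k _
        rw [map_mul, aeval_C, tp_comp, Polynomial.algebraMap_eq]
    _ = ∑ k ∈ Finset.range (n + 1), ∑ i ∈ Finset.range (m + n - k + 1),
          C ((q ^ k * eC q m n k * gP q (m + n - k) i) * y ^ (k + i)) *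
            twistedPow q y (m + n - (k + i)) := by
        apply Finset.sum_congr rfl
        intro k hk
        rw [Finset.mem_range] at hk
        rw [Sshift q y (m + n - k), Finset.mul_sum]
        apply Finset.sum_congr rfl
        intro i hi
        rw [Finset.mem_range] at hi
        rw [← mul_assoc, ← map_mul, show m + n - k - i = m + n - (k + i) by omega]
        congr 2
        rw [mul_pow]
        ring
    _ = ∑ x ∈ S2set m n,
          C ((q ^ x.1 * eC q m n x.1 * gP q (m + n - x.1) x.2) * y ^ (x.1 + x.2)) *
            twistedPow q y (m + n - (x.1 + x.2)) := by
        rw [S2set, Finset.sum_sigma]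
    _ = ∑ s ∈ Finset.range (m + n + 1), ∑ x ∈ Fib2 m n s,
          C ((q ^ x.1 * eC q m n x.1 * gP q (m + n - x.1) x.2) * y ^ (x.1 + x.2)) *
            twistedPow q y (m + n - (x.1 + x.2)) := by
        unfold Fib2
        exact (Finset.sum_fiberwise_of_maps_to hmaps _).symm
    _ = _ := by
        apply Finset.sum_congr rfl
        intro s _
        rw [Finset.sum_congr rfl (fun x hx => by
          have hxs : x.1 + x.2 = s := by
            simp only [Fib2, Finset.mem_filter] at hx
            exact hx.2
          rw [hxs])]
        exact pullout _ _ _ _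

lemma Eleft (m n : ℕ) :
    (∏ i ∈ Finset.range m, (X + C (qInt q (i + 1) * y))) *
    (∏ i ∈ Finset.range n, (X + C (qInt q (i + 1) * y))) =
    ∑ s ∈ Finset.range (m + n + 1),
      C ((∑ x ∈ Fib1 m n s,
          gP q m x.1 * gP q n x.2.1 * eC q (m - x.1) (n - x.2.1) x.2.2) * y ^ s) *
        twistedPow q y (m + n - s) := by
  have hmaps : ∀ x ∈ S1set m n, x.1 + x.2.1 + x.2.2 ∈ Finset.range (m + n + 1) := by
    intro x hx
    simp only [S1set, Finset.mem_sigma, Finset.mem_range] at hx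
    simp only [Finset.mem_range]
    omega
  calc (∏ i ∈ Finset.range m, (X + C (qInt q (i + 1) * y))) *
      (∏ i ∈ Finset.range n, (X + C (qInt q (i + 1) * y)))
      = (∑ i ∈ Finset.range (m + 1), C (gP q m i * y ^ i) * twistedPow q y (m - i)) *
        (∑ j ∈ Finset.range (n + 1), C (gP q n j * y ^ j) * twistedPow q y (n - j)) := by
        rw [Sshift, Sshift]
    _ = ∑ i ∈ Finset.range (m + 1), ∑ j ∈ Finset.range (n + 1),
          (C (gP q m i * y ^ i) * twistedPow q y (m - i)) *
          (C (gP q n j * y ^ j) * twistedPow q y (n - j)) := Finset.sum_mul_sum _ _ _ _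
    _ = ∑ i ∈ Finset.range (m + 1), ∑ j ∈ Finset.range (n + 1), ∑ k ∈ Finset.range (n - j + 1),
          C ((gP q m i * gP q n j * eC q (m - i) (n - j) k) * y ^ (i + j + k)) *
            twistedPow q y (m + n - (i + j + k)) := by
        apply Finset.sum_congr rfl
        intro i hi
        rw [Finset.mem_range] at hi
        apply Finset.sum_congr rfl
        intro j hj
        rw [Finset.mem_range] at hj
        calc (C (gP q m i * y ^ i) * twistedPow q y (m - i)) *
            (C (gP q n j * y ^ j) * twistedPow q y (n - j))
            = C (gP q m i * y ^ i) * C (gP q n j * y ^ j) *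
              (twistedPow q y (m - i) * twistedPow q y (n - j)) := by ring
          _ = _ := by
            rw [Pmul q y (m - i) (n - j), Finset.mul_sum]
            apply Finset.sum_congr rfl
            intro k hk
            rw [Finset.mem_range] at hk
            rw [show m - i + (n - j) - k = m + n - (i + j + k) by omega,
              ← mul_assoc, ← map_mul, ← map_mul]
            congr 2
            ring
    _ = ∑ x ∈ S1set m n,
          C ((gP q m x.1 * gP q n x.2.1 * eC q (m - x.1) (n - x.2.1) x.2.2) *
            y ^ (x.1 + x.2.1 + x.2.2)) *
            twistedPow q y (m + n - (x.1 + x.2.1 + x.2.2)) := by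
        rw [S1set, Finset.sum_sigma]
        exact Finset.sum_congr rfl fun i _ => by rw [Finset.sum_sigma]
    _ = ∑ s ∈ Finset.range (m + n + 1), ∑ x ∈ Fib1 m n s,
          C ((gP q m x.1 * gP q n x.2.1 * eC q (m - x.1) (n - x.2.1) x.2.2) *
            y ^ (x.1 + x.2.1 + x.2.2)) *
            twistedPow q y (m + n - (x.1 + x.2.1 + x.2.2)) := by
        unfold Fib1
        exact (Finset.sum_fiberwise_of_maps_to hmaps _).symm
    _ = _ := by
        apply Finset.sum_congr rfl
        intro s _
        rw [Finset.sum_congr rfl (fun x hx => by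
          have hxs : x.1 + x.2.1 + x.2.2 = s := by
            simp only [Fib1, Finset.mem_filter] at hx
            exact hx.2
          rw [hxs])]
        exact pullout _ _ _ _

/-- the coefficient identity, valid over any commutative ring. -/
lemma coeffId (m n s : ℕ) (hs : s ≤ m + n) :
    (∑ x ∈ Fib1 m n s, gP q m x.1 * gP q n x.2.1 * eC q (m - x.1) (n - x.2.1) x.2.2) * y ^ s
    = (∑ x ∈ Fib2 m n s, q ^ x.1 * eC q m n x.1 * gP q (m + n - x.1) x.2) * y ^ s := by
  set a : ℕ → A := fun s' =>
    (∑ x ∈ Fib1 m n s', gP q m x.1 * gP q n x.2.1 * eC q (m - x.1) (n - x.2.1) x.2.2) * y ^ s'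
    with ha
  set b : ℕ → A := fun s' =>
    (∑ x ∈ Fib2 m n s', q ^ x.1 * eC q m n x.1 * gP q (m + n - x.1) x.2) * y ^ s'
    with hb
  have conv : ∀ c : ℕ → A,
      (∑ s' ∈ Finset.range (m + n + 1), C (c s') * twistedPow q y (m + n - s')) =
      ∑ t ∈ Finset.range (m + n + 1), C (c (m + n - t)) * twistedPow q y t := by
    intro c
    rw [← Finset.sum_range_reflect (fun t => C (c (m + n - t)) * twistedPow q y t) (m + n + 1)]
    apply Finset.sum_congr rfl
    intro j hj
    rw [Finset.mem_range] at hj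
    rw [show m + n + 1 - 1 - j = m + n - j by omega, show m + n - (m + n - j) = j by omega]
  have hE : (∑ t ∈ Finset.range (m + n + 1), C (a (m + n - t)) * twistedPow q y t) =
      ∑ t ∈ Finset.range (m + n + 1), C (b (m + n - t)) * twistedPow q y t := by
    rw [← conv a, ← conv b, ← Eleft q y m n, ← Eright q y m n]
  have := extraction_eq q y (m + n + 1) _ _ hE (m + n - s) (by omega)
  rw [show m + n - (m + n - s) = s by omega] at this
  exact this

end Model

section Transport

variable {R S : Type*} [CommRing R] [CommRing S] (f : R →+* S) (q : R)

lemma map_qInt (n : ℕ) : f (qInt q n) = qInt (f q) n := by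
  simp [qInt, map_sum, map_pow]

lemma map_qFact (n : ℕ) : f (qFact q n) = qFact (f q) n := by
  induction n with
  | zero => simp [qFact]
  | succ n ih => rw [qFact_succ, qFact_succ, map_mul, ih, map_qInt]

lemma map_qChoose : ∀ (n k : ℕ), f (qChoose q n k) = qChoose (f q) n k := by
  intro n
  induction n with
  | zero =>
    intro k
    cases k with
    | zero => simp [qChoose]
    | succ k => simp [qChoose]
  | succ n ih =>
    intro k
    cases k with
    | zero => rw [qChoose_zero, qChoose_zero, map_one]
    | succ k => rw [qChoose_succ, qChoose_succ, map_add, map_mul, map_pow, ih, ih]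

lemma map_gP (n k : ℕ) : f (gP q n k) = gP (f q) n k := by
  simp [gP, map_prod, map_qInt]

lemma map_cc (m n k : ℕ) : f (cc q m n k) = cc (f q) m n k := by
  simp [cc, map_mul, map_pow, map_qChoose]

lemma map_eC (m n k : ℕ) : f (eC q m n k) = eC (f q) m n k := by
  simp [eC, map_mul, map_pow, map_qChoose, map_gP]

end Transport

section UI

open Polynomial

lemma qInt_nat_one (m : ℕ) : qInt (1 : ℤ) m = m := by simp [qInt]

lemma qFact_one_int (n : ℕ) : qFact (1 : ℤ) n = (Nat.factorial n : ℤ) := by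
  induction n with
  | zero => simp [qFact]
  | succ n ih =>
    rw [qFact_succ, ih, qInt_nat_one, Nat.factorial_succ]
    push_cast
    ring

lemma qFact_X_ne_zero (n : ℕ) : qFact (X : Polynomial ℤ) n ≠ 0 := by
  intro h
  have h1 := congrArg (Polynomial.evalRingHom (1 : ℤ)) h
  rw [map_qFact, map_zero,
    show (Polynomial.evalRingHom (1:ℤ)) (X : Polynomial ℤ) = 1 by simp,
    qFact_one_int] at h1
  have h2 : Nat.factorial n = 0 := by exact_mod_cast h1
  exact (Nat.factorial_pos n).ne' h2

/-- The universal divided-power coefficient identity over `ℤ[X]`. -/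
lemma UIZ (m n s : ℕ) :
    (∑ x ∈ Fib1 m n s, cc (X : Polynomial ℤ) (m - x.1) (n - x.2.1) x.2.2)
    = ∑ x ∈ Fib2 m n s, (X : Polynomial ℤ) ^ x.1 * cc (X : Polynomial ℤ) m n x.1 := by
  set q : Polynomial ℤ := X with hq
  by_cases hs : s ≤ m + n
  · have H := coeffId q (1 : Polynomial ℤ) m n s hs
    rw [one_pow, mul_one, mul_one] at H
    have hfact : qFact q m * qFact q n ≠ 0 :=
      mul_ne_zero (qFact_X_ne_zero m) (qFact_X_ne_zero n)
    apply mul_left_cancel₀ hfact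
    have hL : qFact q m * qFact q n *
        (∑ x ∈ Fib1 m n s, cc q (m - x.1) (n - x.2.1) x.2.2) =
        (∑ x ∈ Fib1 m n s, gP q m x.1 * gP q n x.2.1 * eC q (m - x.1) (n - x.2.1) x.2.2) *
          qFact q (m + n - s) := by
      rw [Finset.mul_sum, Finset.sum_mul]
      apply Finset.sum_congr rfl
      intro x hx
      have hm : x.1 ≤ m ∧ x.2.1 ≤ n ∧ x.2.2 ≤ n - x.2.1 ∧ x.1 + x.2.1 + x.2.2 = s := by
        simp only [Fib1, S1set, Finset.mem_filter, Finset.mem_sigma, Finset.mem_range] at hx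
        omega
      obtain ⟨h1, h2, h3, h4⟩ := hm
      have A1 : cc q (m - x.1) (n - x.2.1) x.2.2 * qFact q (m - x.1) * qFact q (n - x.2.1) =
          eC q (m - x.1) (n - x.2.1) x.2.2 * qFact q (m + n - s) := by
        have := L3 q (m := m - x.1) h3
        rwa [show m - x.1 + (n - x.2.1) - x.2.2 = m + n - s by omega] at this
      have A2 : gP q m x.1 * qFact q (m - x.1) = qFact q m := L2 q h1
      have A3 : gP q n x.2.1 * qFact q (n - x.2.1) = qFact q n := L2 q h2
      calc qFact q m * qFact q n * cc q (m - x.1) (n - x.2.1) x.2.2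
          = gP q m x.1 * gP q n x.2.1 *
            (cc q (m - x.1) (n - x.2.1) x.2.2 * qFact q (m - x.1) * qFact q (n - x.2.1)) := by
            rw [← A2, ← A3]; ring
        _ = gP q m x.1 * gP q n x.2.1 * (eC q (m - x.1) (n - x.2.1) x.2.2 *
            qFact q (m + n - s)) := by rw [A1]
        _ = _ := by ring
    have hR : qFact q m * qFact q n *
        (∑ x ∈ Fib2 m n s, q ^ x.1 * cc q m n x.1) =
        (∑ x ∈ Fib2 m n s, q ^ x.1 * eC q m n x.1 * gP q (m + n - x.1) x.2) *
          qFact q (m + n - s) := by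
      rw [Finset.mul_sum, Finset.sum_mul]
      apply Finset.sum_congr rfl
      intro x hx
      have hm : x.1 ≤ n ∧ x.2 ≤ m + n - x.1 ∧ x.1 + x.2 = s := by
        simp only [Fib2, S2set, Finset.mem_filter, Finset.mem_sigma, Finset.mem_range] at hx
        omega
      obtain ⟨h1, h2, h3⟩ := hm
      have A1 : cc q m n x.1 * qFact q m * qFact q n = eC q m n x.1 * qFact q (m + n - x.1) :=
        L3 q h1
      have A2 : gP q (m + n - x.1) x.2 * qFact q (m + n - x.1 - x.2) = qFact q (m + n - x.1) :=
        L2 q h2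
      rw [show m + n - x.1 - x.2 = m + n - s by omega] at A2
      calc qFact q m * qFact q n * (q ^ x.1 * cc q m n x.1)
          = q ^ x.1 * (cc q m n x.1 * qFact q m * qFact q n) := by ring
        _ = q ^ x.1 * (eC q m n x.1 * qFact q (m + n - x.1)) := by rw [A1]
        _ = q ^ x.1 * (eC q m n x.1 * (gP q (m + n - x.1) x.2 * qFact q (m + n - s))) := by
            rw [A2]
        _ = _ := by ring
    rw [hL, hR, H]
  · have e1 : Fib1 m n s = ∅ := by
      apply Finset.filter_false_of_mem
      intro x hx
      simp only [S1set, Finset.mem_sigma, Finset.mem_range] at hx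
      omega
    have e2 : Fib2 m n s = ∅ := by
      apply Finset.filter_false_of_mem
      intro x hx
      simp only [S2set, Finset.mem_sigma, Finset.mem_range] at hx
      omega
    rw [e1, e2]
    simp

/-- The universal identity, transported to an arbitrary commutative ring. -/
lemma UI {R : Type*} [CommRing R] (q : R) (m n s : ℕ) :
    (∑ x ∈ Fib1 m n s, cc q (m - x.1) (n - x.2.1) x.2.2)
    = ∑ x ∈ Fib2 m n s, q ^ x.1 * cc q m n x.1 := by
  have H := congrArg (Polynomial.eval₂RingHom (Int.castRingHom R) q) (UIZ m n s)
  rw [map_sum, map_sum] at H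
  simp only [map_mul, map_pow] at H
  rw [Finset.sum_congr rfl (fun x _ => map_cc (Polynomial.eval₂RingHom (Int.castRingHom R) q)
    (X : Polynomial ℤ) (m - x.1) (n - x.2.1) x.2.2)] at H
  rw [Finset.sum_congr rfl (fun x (_ : x ∈ Fib2 m n s) => by
    rw [map_cc (Polynomial.eval₂RingHom (Int.castRingHom R) q) (X : Polynomial ℤ) m n x.1])] at H
  simpa using H

end UI

section Span

open Polynomial

variable {A : Type*} [CommRing A] (q y : A)

lemma tp_span (p : Polynomial A) :
    p ∈ Submodule.span A (Set.range (twistedPow q y)) := by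
  have main : ∀ (N : ℕ) (p : Polynomial A), p.natDegree ≤ N →
      p ∈ Submodule.span A (Set.range (twistedPow q y)) := by
    intro N
    induction N with
    | zero =>
      intro p hp
      obtain ⟨a, rfl⟩ : ∃ a, p = C a := ⟨p.coeff 0, Polynomial.eq_C_of_natDegree_le_zero hp⟩
      have : C a = a • twistedPow q y 0 := by
        rw [tp_zero, smul_eq_C_mul, mul_one]
      rw [this]
      exact Submodule.smul_mem _ a (Submodule.subset_span ⟨0, rfl⟩)
    | succ N ih =>
      intro p hp
      by_cases hN : p.natDegree ≤ N
      · exact ih p hN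
      · set c := p.coeff (N + 1) with hc
        have hp' : (p - C c * twistedPow q y (N + 1)).natDegree ≤ N := by
          apply Polynomial.natDegree_le_iff_coeff_eq_zero.mpr
          intro j hj
          rw [Polynomial.coeff_sub, Polynomial.coeff_C_mul]
          rcases Nat.lt_or_ge (N + 1) j with h' | h'
          · rw [Polynomial.coeff_eq_zero_of_natDegree_lt (lt_of_le_of_lt hp h'),
              tp_coeff_high q y h', mul_zero, sub_zero]
          · have : j = N + 1 := by omega
            subst this
            rw [tp_coeff_self, mul_one, ← hc, sub_self]
        have hmem := ih _ hp'
        have : p = (p - C c * twistedPow q y (N + 1)) + c • twistedPow q y (N + 1) := by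
          rw [smul_eq_C_mul]; ring
        rw [this]
        exact Submodule.add_mem _ hmem
          (Submodule.smul_mem _ c (Submodule.subset_span ⟨N + 1, rfl⟩))
  exact main p.natDegree p le_rfl

end Span

section Main

variable {R A B : Type*} [CommRing R] [CommRing A] [Algebra R A]
  [CommRing B] [Algebra A B]

/-- `σ(ξ^{[t]}) = Σ_{i≤t} y^i ξ^{[t-i]}`. -/
noncomputable def wB (y : A) (b : Module.Basis ℕ A B) (t : ℕ) : B :=
  ∑ i ∈ Finset.range (t + 1), y ^ i • b (t - i)

/-- the semilinear endomorphism `σ_B`. -/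
noncomputable def sigB (σA : A →ₐ[R] A) (y : A) (b : Module.Basis ℕ A B) (u : B) : B :=
  (b.repr u).sum fun t a => σA a • wB y b t

variable (σA : A →ₐ[R] A) (y : A) (b : Module.Basis ℕ A B)

lemma sigB_add (u v : B) : sigB σA y b (u + v) = sigB σA y b u + sigB σA y b v := by
  unfold sigB
  rw [map_add]
  exact Finsupp.sum_add_index' (fun t => by simp) (fun t a1 a2 => by rw [map_add, add_smul])

lemma sigB_zero : sigB σA y b 0 = 0 := by
  unfold sigB
  simp

lemma sigB_smul (a : A) (u : B) : sigB σA y b (a • u) = σA a • sigB σA y b u := by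
  unfold sigB
  rw [map_smul, Finsupp.sum_smul_index (fun t => by simp), Finsupp.smul_sum]
  apply Finsupp.sum_congr
  intro t _
  rw [map_mul, mul_smul]

lemma sigB_basis (n : ℕ) : sigB σA y b (b n) = wB y b n := by
  unfold sigB
  rw [b.repr_self, Finsupp.sum_single_index (by simp), map_one, one_smul]

lemma sigB_sum {ι : Type*} (F : Finset ι) (f : ι → B) :
    sigB σA y b (∑ i ∈ F, f i) = ∑ i ∈ F, sigB σA y b (f i) := by
  classical
  induction F using Finset.cons_induction with
  | empty => simpa using sigB_zero σA y b
  | cons a F ha ih => rw [Finset.sum_cons, sigB_add, ih, Finset.sum_cons]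

variable (q : R)

lemma sigB_key
    (hy : σA y = algebraMap R A q * y)
    (hb : ∀ m n : ℕ, b m * b n = ∑ i ∈ Finset.range (min m n + 1),
      dpCoeff (algebraMap R A q) y m n i • b (m + n - i))
    (m n : ℕ) :
    sigB σA y b (b m * b n) = sigB σA y b (b m) * sigB σA y b (b n) := by
  set q' : A := algebraMap R A q with hq'
  have hccA : ∀ m n k, σA (cc q' m n k) = cc q' m n k := by
    intro m n k
    rw [show cc q' m n k = algebraMap R A (cc q m n k) from (map_cc (algebraMap R A) q m n k).symm]
    exact σA.commutes _
  have dp_eq : ∀ m n k, dpCoeff q' y m n k = cc q' m n k * y ^ k := by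
    intro m n k
    rw [dpCoeff, cc]
  have hmaps2 : ∀ x ∈ S2set m n, x.1 + x.2 ∈ Finset.range (m + n + 1) := by
    intro x hx
    simp only [S2set, Finset.mem_sigma, Finset.mem_range] at hx
    simp only [Finset.mem_range]
    omega
  have hmaps1 : ∀ x ∈ S1set m n, x.1 + x.2.1 + x.2.2 ∈ Finset.range (m + n + 1) := by
    intro x hx
    simp only [S1set, Finset.mem_sigma, Finset.mem_range] at hx
    simp only [Finset.mem_range]
    omega
  have hL : sigB σA y b (b m * b n) =
      ∑ s ∈ Finset.range (m + n + 1),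
        ((∑ x ∈ Fib2 m n s, q' ^ x.1 * cc q' m n x.1) * y ^ s) • b (m + n - s) := by
    calc sigB σA y b (b m * b n)
        = ∑ k ∈ Finset.range (min m n + 1),
            σA (dpCoeff q' y m n k) • wB y b (m + n - k) := by
          rw [hb m n, sigB_sum]
          exact Finset.sum_congr rfl fun k _ => by rw [sigB_smul, sigB_basis]
      _ = ∑ k ∈ Finset.range (min m n + 1),
            ((q' ^ k * cc q' m n k) * y ^ k) • wB y b (m + n - k) := by
          apply Finset.sum_congr rfl
          intro k _
          rw [dp_eq, map_mul, hccA, map_pow, hy, mul_pow]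
          congr 1
          ring
      _ = ∑ k ∈ Finset.range (n + 1),
            ((q' ^ k * cc q' m n k) * y ^ k) • wB y b (m + n - k) := by
          apply Finset.sum_subset (Finset.range_subset_range.mpr (by omega))
          intro k hk hk'
          have hmk : m < k := by
            simp only [Finset.mem_range] at hk hk'
            omega
          rw [cc_eq_zero_left q' hmk]
          simp
      _ = ∑ k ∈ Finset.range (n + 1), ∑ i ∈ Finset.range (m + n - k + 1),
            ((q' ^ k * cc q' m n k) * y ^ (k + i)) • b (m + n - (k + i)) := by
          apply Finset.sum_congr rfl
          intro k hk
          rw [Finset.mem_range] at hk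
          rw [wB, Finset.smul_sum]
          apply Finset.sum_congr rfl
          intro i hi
          rw [Finset.mem_range] at hi
          rw [smul_smul, show m + n - k - i = m + n - (k + i) by omega]
          congr 1
          rw [pow_add]
          ring
      _ = ∑ x ∈ S2set m n,
            ((q' ^ x.1 * cc q' m n x.1) * y ^ (x.1 + x.2)) • b (m + n - (x.1 + x.2)) := by
          rw [S2set, Finset.sum_sigma]
      _ = ∑ s ∈ Finset.range (m + n + 1), ∑ x ∈ Fib2 m n s,
            ((q' ^ x.1 * cc q' m n x.1) * y ^ (x.1 + x.2)) • b (m + n - (x.1 + x.2)) := by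
          unfold Fib2
          exact (Finset.sum_fiberwise_of_maps_to hmaps2 _).symm
      _ = _ := by
          apply Finset.sum_congr rfl
          intro s _
          rw [Finset.sum_congr rfl (fun x hx => by
            have hxs : x.1 + x.2 = s := by
              simp only [Fib2, Finset.mem_filter] at hx
              exact hx.2
            rw [hxs])]
          rw [← Finset.sum_smul, ← Finset.sum_mul]
  have hR : sigB σA y b (b m) * sigB σA y b (b n) =
      ∑ s ∈ Finset.range (m + n + 1),
        ((∑ x ∈ Fib1 m n s, cc q' (m - x.1) (n - x.2.1) x.2.2) * y ^ s) • b (m + n - s) := by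
    calc sigB σA y b (b m) * sigB σA y b (b n)
        = ∑ i ∈ Finset.range (m + 1), ∑ j ∈ Finset.range (n + 1),
            (y ^ i • b (m - i)) * (y ^ j • b (n - j)) := by
          rw [sigB_basis, sigB_basis, wB, wB]
          exact Finset.sum_mul_sum _ _ _ _
      _ = ∑ i ∈ Finset.range (m + 1), ∑ j ∈ Finset.range (n + 1), ∑ k ∈ Finset.range (n - j + 1),
            (cc q' (m - i) (n - j) k * y ^ (i + j + k)) • b (m + n - (i + j + k)) := by
          apply Finset.sum_congr rfl
          intro i hi
          rw [Finset.mem_range] at hi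
          apply Finset.sum_congr rfl
          intro j hj
          rw [Finset.mem_range] at hj
          calc (y ^ i • b (m - i)) * (y ^ j • b (n - j))
              = (y ^ i * y ^ j) • (b (m - i) * b (n - j)) := smul_mul_smul_comm _ _ _ _
            _ = ∑ k ∈ Finset.range (min (m - i) (n - j) + 1),
                  (y ^ i * y ^ j) • (dpCoeff q' y (m - i) (n - j) k • b (m - i + (n - j) - k)) := by
                rw [hb (m - i) (n - j), Finset.smul_sum]
            _ = ∑ k ∈ Finset.range (min (m - i) (n - j) + 1),
                  (cc q' (m - i) (n - j) k * y ^ (i + j + k)) • b (m + n - (i + j + k)) := by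
                apply Finset.sum_congr rfl
                intro k _
                rw [smul_smul, dp_eq, show m - i + (n - j) - k = m + n - (i + j + k) by omega]
                congr 1
                rw [pow_add, pow_add]
                ring
            _ = _ := by
                apply Finset.sum_subset (Finset.range_subset_range.mpr (by omega))
                intro k hk hk'
                have hmk : m - i < k := by
                  simp only [Finset.mem_range] at hk hk'
                  omega
                rw [cc_eq_zero_left q' hmk]
                simp
      _ = ∑ x ∈ S1set m n,
            (cc q' (m - x.1) (n - x.2.1) x.2.2 * y ^ (x.1 + x.2.1 + x.2.2)) •
              b (m + n - (x.1 + x.2.1 + x.2.2)) := by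
          rw [S1set, Finset.sum_sigma]
          exact Finset.sum_congr rfl fun i _ => by rw [Finset.sum_sigma]
      _ = ∑ s ∈ Finset.range (m + n + 1), ∑ x ∈ Fib1 m n s,
            (cc q' (m - x.1) (n - x.2.1) x.2.2 * y ^ (x.1 + x.2.1 + x.2.2)) •
              b (m + n - (x.1 + x.2.1 + x.2.2)) := by
          unfold Fib1
          exact (Finset.sum_fiberwise_of_maps_to hmaps1 _).symm
      _ = _ := by
          apply Finset.sum_congr rfl
          intro s _
          rw [Finset.sum_congr rfl (fun x hx => by
            have hxs : x.1 + x.2.1 + x.2.2 = s := by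
              simp only [Fib1, Finset.mem_filter] at hx
              exact hx.2
            rw [hxs])]
          rw [← Finset.sum_smul, ← Finset.sum_mul]
  rw [hL, hR]
  apply Finset.sum_congr rfl
  intro s _
  rw [UI q' m n s]

end Main

end S10

open S10

/-- On the twisted divided power polynomial ring `B = A⟨ξ⟩_{q,y}` (basis `b`), there is a
(unique) `σ_A`-semilinear endomorphism `σ_B` with `σ_B(ξ^{[n]}) = Σ_{i≤n} y^i ξ^{[n−i]}`, and it
is a ring homomorphism; moreover any `A`-algebra morphism `T : A[ξ] → B` with
`T(ξ^{(n)}) = (n)_q! ξ^{[n]}` intertwines the semilinear endomorphism `σ` of `A[ξ]` (with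
`σ(ξ) = ξ + y`) and `σ_B`. -/
theorem statement10 {R A B : Type*} [CommRing R] [CommRing A] [Algebra R A]
    [CommRing B] [Algebra A B]
    (q : R) (σA : A →ₐ[R] A) (y : A) (hy : σA y = algebraMap R A q * y)
    (b : Module.Basis ℕ A B)
    (hb : ∀ m n : ℕ, b m * b n = ∑ i ∈ Finset.range (min m n + 1),
      dpCoeff (algebraMap R A q) y m n i • b (m + n - i)) :
    ∃ σB : B → B,
      (∀ u v : B, σB (u + v) = σB u + σB v) ∧
      (∀ (a : A) (u : B), σB (a • u) = σA a • σB u) ∧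
      (∀ n : ℕ, σB (b n) = ∑ i ∈ Finset.range (n + 1), y ^ i • b (n - i)) ∧
      (∀ u v : B, σB (u * v) = σB u * σB v) ∧
      σB 1 = 1 ∧
      (∀ T : Polynomial A →ₐ[A] B,
        (∀ n : ℕ, T (twistedPow (algebraMap R A q) y n) =
          qFact (algebraMap R A q) n • b n) →
        ∀ f : Polynomial A,
          T (Polynomial.eval₂ (Polynomial.C.comp σA.toRingHom)
              (Polynomial.X + Polynomial.C y) f) = σB (T f)) := by
  classical
  set q' : A := algebraMap R A q with hq'
  -- spanning of the basis
  have hspan : ∀ u : B, u ∈ Submodule.span A (Set.range b) := by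
    intro u
    rw [b.span_eq]
    trivial
  -- general multiplicativity
  have hmul : ∀ u v : B, sigB σA y b (u * v) = sigB σA y b u * sigB σA y b v := by
    have h1 : ∀ (m : ℕ) (v : B), sigB σA y b (b m * v) = sigB σA y b (b m) * sigB σA y b v := by
      intro m v
      induction hspan v using Submodule.span_induction with
      | mem x hx =>
        obtain ⟨n, rfl⟩ := hx
        exact sigB_key σA y b q hy hb m n
      | zero => rw [mul_zero, sigB_zero, mul_zero]
      | add x z hx hz ihx ihz => rw [mul_add, sigB_add, ihx, ihz, sigB_add, mul_add]
      | smul a x hx ih => rw [mul_smul_comm, sigB_smul, ih, sigB_smul, mul_smul_comm]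
    intro u v
    induction hspan u using Submodule.span_induction with
    | mem x hx =>
      obtain ⟨m, rfl⟩ := hx
      exact h1 m v
    | zero => rw [zero_mul, sigB_zero, zero_mul]
    | add x z hx hz ihx ihz => rw [add_mul, sigB_add, ihx, ihz, sigB_add, add_mul]
    | smul a x hx ih => rw [smul_mul_assoc, sigB_smul, ih, sigB_smul, smul_mul_assoc]
  -- b 0 = 1
  have hb0 : (b 0 : B) = 1 := by
    have h00 : ∀ n, b 0 * b n = b n := by
      intro n
      rw [hb 0 n]
      simp only [Nat.zero_min, Finset.sum_range_one]
      simp [dpCoeff, qChoose_zero]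
    have hall : ∀ u : B, b 0 * u = u := by
      intro u
      induction hspan u using Submodule.span_induction with
      | mem x hx => obtain ⟨n, rfl⟩ := hx; exact h00 n
      | zero => rw [mul_zero]
      | add x z hx hz ihx ihz => rw [mul_add, ihx, ihz]
      | smul a x hx ih => rw [mul_smul_comm, ih]
    calc (b 0 : B) = b 0 * 1 := (mul_one _).symm
      _ = 1 := hall 1
  have hone : sigB σA y b 1 = 1 := by
    rw [← hb0, sigB_basis, wB]
    simp [hb0]
  refine ⟨sigB σA y b, sigB_add σA y b, sigB_smul σA y b,
    fun n => sigB_basis σA y b n, hmul, hone, ?_⟩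
  -- the T part
  intro T hT f
  have hσfix : ∀ r : R, σA (algebraMap R A r) = algebraMap R A r := fun r => σA.commutes r
  set ΦRH : Polynomial A →+* Polynomial A :=
    Polynomial.eval₂RingHom (Polynomial.C.comp σA.toRingHom)
      (Polynomial.X + Polynomial.C y) with hΦRH
  have hΦeval : ∀ g : Polynomial A,
      Polynomial.eval₂ (Polynomial.C.comp σA.toRingHom)
        (Polynomial.X + Polynomial.C y) g = ΦRH g := fun g => rfl
  rw [hΦeval]
  have hΦC : ∀ c : A, ΦRH (Polynomial.C c) = Polynomial.C (σA c) := fun c => by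
    rw [hΦRH, Polynomial.coe_eval₂RingHom, Polynomial.eval₂_C, RingHom.comp_apply]
    rfl
  have hΦX : ΦRH Polynomial.X = Polynomial.X + Polynomial.C y := by
    rw [hΦRH, Polynomial.coe_eval₂RingHom, Polynomial.eval₂_X]
  have hσqInt : ∀ i : ℕ, σA (qInt q' i) = qInt q' i := fun i => by
    rw [show qInt q' i = algebraMap R A (qInt q i) from (map_qInt (algebraMap R A) q i).symm]
    exact σA.commutes _
  have hσqFact : ∀ t : ℕ, σA (qFact q' t) = qFact q' t := fun t => by
    rw [show qFact q' t = algebraMap R A (qFact q t) from (map_qFact (algebraMap R A) q t).symm]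
    exact σA.commutes _
  have hΦtp : ∀ t : ℕ, ΦRH (twistedPow q' y t) =
      ∏ i ∈ Finset.range t, (Polynomial.X + Polynomial.C (qInt q' (i + 1) * y)) := by
    intro t
    rw [twistedPow, map_prod]
    apply Finset.prod_congr rfl
    intro i _
    rw [map_add, hΦX, hΦC, map_mul, hσqInt, hy]
    rw [show qInt q' (i + 1) * y = y + qInt q' i * (q' * y) by rw [qInt_succ]; ring, map_add]
    ring
  have hTC : ∀ (c : A) (p : Polynomial A), T (Polynomial.C c * p) = c • T p := by
    intro c p
    rw [map_mul, show (Polynomial.C c : Polynomial A) = algebraMap A (Polynomial A) c from rfl,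
      AlgHom.commutes, Algebra.smul_def]
  have key : ∀ t : ℕ, T (ΦRH (twistedPow q' y t)) = sigB σA y b (T (twistedPow q' y t)) := by
    intro t
    rw [hΦtp t, Sshift q' y t, map_sum, hT t, sigB_smul, hσqFact, sigB_basis, wB,
      Finset.smul_sum]
    apply Finset.sum_congr rfl
    intro i hi
    rw [Finset.mem_range] at hi
    rw [hTC, hT, smul_smul, smul_smul]
    congr 1
    calc gP q' t i * y ^ i * qFact q' (t - i)
        = gP q' t i * qFact q' (t - i) * y ^ i := by ring
      _ = qFact q' t * y ^ i := by rw [L2 q' (show i ≤ t by omega)]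
  induction tp_span q' y f using Submodule.span_induction with
  | mem x hx =>
    obtain ⟨t, rfl⟩ := hx
    exact key t
  | zero => rw [map_zero, map_zero, sigB_zero]
  | add x z hx hz ihx ihz => rw [map_add, map_add, ihx, ihz, map_add, sigB_add]
  | smul a x hx ih =>
    rw [Polynomial.smul_eq_C_mul, map_mul, hΦC, hTC (σA a) (ΦRH x), hTC a x, ih, sigB_smul]
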